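/- Let x lie on the cone boundary C(c, c−p, ψ, E) with x in the half-space (c−p)^T E²(x−c) ≥ 0. Then the avoidance vector field u := −k·E⁻¹π⊥(E(x−c))E(x−p) has nonnegative inner product with the outward normal n(x) := E π^ψ(E(c−p)) E(x−c), i.e., u^T n(x) ≥ 0. -/

import Mathlib

open Matrix

/-- Euclidean norm of a vector, `‖v‖ = √(v ⬝ᵥ v)`. -/
noncomputable def enorm₂ {n : ℕ} (v : Fin n → ℝ) : ℝ := Real.sqrt (v ⬝ᵥ v)

/-- Orthogonal projection `π⊥(z) = I - zzᵀ/‖z‖²`. -/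
noncomputable def projPerp {n : ℕ} (z : Fin n → ℝ) : Matrix (Fin n) (Fin n) ℝ :=
  1 - (z ⬝ᵥ z)⁻¹ • vecMulVec z z

/-- Parallel projection `π∥(z) = zzᵀ/‖z‖²`. -/
noncomputable def projPar {n : ℕ} (z : Fin n → ℝ) : Matrix (Fin n) (Fin n) ℝ :=
  (z ⬝ᵥ z)⁻¹ • vecMulVec z z

/-- Parametric map `π^ψ(z) = cos²ψ·π⊥(z) − sin²ψ·π∥(z)`. -/
noncomputable def projTheta {n : ℕ} (z : Fin n → ℝ) (ψ : ℝ) : Matrix (Fin n) (Fin n) ℝ :=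
  (Real.cos ψ ^ 2) • projPerp z - (Real.sin ψ ^ 2) • projPar z

lemma vecMulVec_mulVec'' {n : ℕ} (z w : Fin n → ℝ) :
    vecMulVec z z *ᵥ w = (z ⬝ᵥ w) • z := by
  funext _i
  simp only [mulVec, vecMulVec_apply, dotProduct, Pi.smul_apply, smul_eq_mul]
  rw [Finset.sum_mul]
  exact Finset.sum_congr rfl fun j _ => by ring

lemma dp_self_pos {n : ℕ} {v : Fin n → ℝ} (hv : v ≠ 0) : 0 < v ⬝ᵥ v :=
  lt_of_le_of_ne (Finset.sum_nonneg fun i _ => mul_self_nonneg _)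
    (fun h => hv (dotProduct_self_eq_zero.mp h.symm))

/-- On the cone boundary `C(c,c-p,ψ,E)`, the avoidance field has nonnegative inner
product with the normal `n(x) = E π^ψ(E(c-p)) E(x-c)`. -/
theorem avoidance_field_vs_cone_normal {n : ℕ} (E : Matrix (Fin n) (Fin n) ℝ)
    (hE : E.PosDef) (c p x : Fin n → ℝ) (hx : x ≠ c) (hp : p ≠ c) (k : ℝ) (hk : 0 ≤ k)
    (ψ : ℝ) (hψ₀ : 0 ≤ ψ) (hψ : ψ ≤ Real.pi / 2)
    (hcone : Real.cos ψ * enorm₂ (E *ᵥ (c - p)) * enorm₂ (E *ᵥ (x - c))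
      = (c - p) ⬝ᵥ ((E * E) *ᵥ (x - c)))
    (u nx : Fin n → ℝ)
    (hu : u = -(k • (E⁻¹ *ᵥ (projPerp (E *ᵥ (x - c)) *ᵥ (E *ᵥ (x - p))))))
    (hnx : nx = E *ᵥ (projTheta (E *ᵥ (c - p)) ψ *ᵥ (E *ᵥ (x - c)))) :
    0 ≤ u ⬝ᵥ nx := by
  have hEt : Eᵀ = E := by simpa using hE.isHermitian.eq
  have hdet := (isUnit_iff_isUnit_det E).mp hE.isUnit
  have hEEinv : E * E⁻¹ = 1 := mul_nonsing_inv E hdet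
  have hinj := Matrix.mulVec_injective_iff_isUnit.mpr hE.isUnit
  set a := E *ᵥ (x - c) with ha
  set b := E *ᵥ (c - p) with hb
  have hane : a ≠ 0 := fun h => (sub_ne_zero.mpr hx)
    (hinj (show E *ᵥ (x - c) = E *ᵥ 0 by rw [← ha, h]; simp))
  have hbne : b ≠ 0 := fun h => (sub_ne_zero.mpr (fun h' : c = p => hp h'.symm))
    (hinj (show E *ᵥ (c - p) = E *ᵥ 0 by rw [← hb, h]; simp))
  set α := a ⬝ᵥ a with hαdef
  set β := b ⬝ᵥ b with hβdef
  set γ := b ⬝ᵥ a with hγdef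
  have hab : a ⬝ᵥ b = γ := dotProduct_comm a b
  have hα : 0 < α := dp_self_pos hane
  have hβ : 0 < β := dp_self_pos hbne
  -- cone condition in terms of α, β, γ
  have hγ : Real.cos ψ * Real.sqrt β * Real.sqrt α = γ := by
    have h2 : (c - p) ⬝ᵥ ((E * E) *ᵥ (x - c)) = γ := by
      rw [← mulVec_mulVec, dotProduct_mulVec, ← mulVec_transpose, hEt]
    rw [← h2, ← hcone]; rfl
  have hγnn : 0 ≤ γ := by
    rw [← hγ]
    have := Real.cos_nonneg_of_mem_Icc ⟨by linarith [Real.pi_pos], hψ⟩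
    positivity
  have hγ2 : γ ^ 2 = Real.cos ψ ^ 2 * α * β := by
    rw [← hγ]
    rw [mul_pow, mul_pow, Real.sq_sqrt hβ.le, Real.sq_sqrt hα.le]; ring
  -- E (x - p) = a + b
  have hxp : E *ᵥ (x - p) = a + b := by
    rw [ha, hb, ← mulVec_add, sub_add_sub_cancel]
  -- explicit forms of the projected vectors
  have hw : projPerp a *ᵥ (a + b) = (a + b) - (α⁻¹ * (α + γ)) • a := by
    rw [projPerp, sub_mulVec, one_mulVec, smul_mulVec, vecMulVec_mulVec'',
      smul_smul, dotProduct_add, ← hαdef, hab]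
  have hv : projTheta b ψ *ᵥ a =
      (Real.cos ψ ^ 2) • (a - (β⁻¹ * γ) • b) - (Real.sin ψ ^ 2) • ((β⁻¹ * γ) • b) := by
    rw [projTheta, projPar, projPerp, sub_mulVec, smul_mulVec, smul_mulVec,
      sub_mulVec, one_mulVec, smul_mulVec, vecMulVec_mulVec'', smul_smul, smul_smul,
      ← hβdef, ← hγdef]
  -- the key dot product
  have hwv : (projPerp a *ᵥ (E *ᵥ (x - p))) ⬝ᵥ (projTheta b ψ *ᵥ a)
      = (Real.cos ψ ^ 2 - 1) * γ := by
    rw [hxp, hw, hv]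
    simp only [dotProduct_sub, sub_dotProduct, dotProduct_add, add_dotProduct,
      dotProduct_smul, smul_dotProduct, smul_eq_mul, ← hαdef, ← hβdef, ← hγdef, hab]
    rw [Real.sin_sq ψ]
    field_simp
    linear_combination γ * hγ2
  rw [hu, hnx, neg_dotProduct, smul_dotProduct, smul_eq_mul,
    dotProduct_mulVec, ← mulVec_transpose, hEt, mulVec_mulVec, hEEinv, one_mulVec, hwv]
  have hc1 : Real.cos ψ ^ 2 ≤ 1 := by nlinarith [Real.cos_le_one ψ, Real.neg_one_le_cos ψ]
  nlinarith [mul_nonneg hk hγnn, mul_nonneg (mul_nonneg hk hγnn) (sub_nonneg.mpr hc1)]
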